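/- Let u : Fin N → ℝ be a probability mass function with positive entries, not all equal, and suppose α satisfies 1 - ∑ i (u i)^2 < α < 1 - u_min, where u_min is the minimum of u. Then there exists a unique ϖ* > 0 such that (∑ i, (u i)^2 * exp(ϖ* * (1 - u i))) / (∑ i, u i * exp(ϖ* * (1 - u i))) = 1 - α, provided u has a unique minimizing index. -/

import Mathlib

open Finset Real Filter

theorem stmt_12 (N : ℕ) (hN : 2 ≤ N) (u : Fin N → ℝ)
    (hpos : ∀ i, 0 < u i) (hsum : ∑ i, u i = 1)
    (m : Fin N) (hmin : ∀ i, i ≠ m → u m < u i)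
    (α : ℝ) (hα₁ : 1 - ∑ i, (u i) ^ 2 < α) (hα₂ : α < 1 - u m) :
    ∃! ϖ : ℝ, 0 < ϖ ∧
      (∑ i, (u i) ^ 2 * Real.exp (ϖ * (1 - u i))) /
        (∑ i, u i * Real.exp (ϖ * (1 - u i))) = 1 - α := by
  set num : ℝ → ℝ := fun ϖ => ∑ i, (u i) ^ 2 * Real.exp (ϖ * (1 - u i)) with hnum
  set den : ℝ → ℝ := fun ϖ => ∑ i, u i * Real.exp (ϖ * (1 - u i)) with hden
  have hden_pos : ∀ ϖ, 0 < den ϖ :=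
    fun ϖ => Finset.sum_pos (fun i _ => mul_pos (hpos i) (Real.exp_pos _)) ⟨m, mem_univ m⟩
  set g : ℝ → ℝ := fun ϖ => num ϖ / den ϖ with hg
  -- key cross inequality
  have key : ∀ x y : ℝ, x < y → num y * den x < num x * den y := by
    intro x y hxy
    set c : Fin N → Fin N → ℝ :=
      fun i j => u i * u j * Real.exp (x * (1 - u i)) * Real.exp (y * (1 - u j)) with hc
    have h1 : num x * den y = ∑ i, ∑ j, u i * c i j := by
      rw [hnum, hden, Finset.sum_mul_sum]
      exact Finset.sum_congr rfl fun i _ => Finset.sum_congr rfl fun j _ => by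
        simp only [hc]; ring
    have h2 : num y * den x = ∑ i, ∑ j, u j * c i j := by
      rw [hnum, hden, Finset.sum_mul_sum, Finset.sum_comm]
      exact Finset.sum_congr rfl fun i _ => Finset.sum_congr rfl fun j _ => by
        simp only [hc]; ring
    have hcle : ∀ i j, u i ≤ u j → c i j ≤ c j i := by
      intro i j hij
      simp only [hc]
      have h1 : u j * u i * Real.exp (x * (1 - u j)) * Real.exp (y * (1 - u i))
          = u i * u j * Real.exp (x * (1 - u j) + y * (1 - u i)) := by
        rw [Real.exp_add]; ring
      have h2 : u i * u j * Real.exp (x * (1 - u i)) * Real.exp (y * (1 - u j))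
          = u i * u j * Real.exp (x * (1 - u i) + y * (1 - u j)) := by
        rw [Real.exp_add]; ring
      rw [h1, h2]
      apply mul_le_mul_of_nonneg_left _ (le_of_lt (mul_pos (hpos i) (hpos j)))
      apply Real.exp_le_exp.2
      nlinarith
    have hclt : ∀ i j, u i < u j → c i j < c j i := by
      intro i j hij
      simp only [hc]
      have h1 : u j * u i * Real.exp (x * (1 - u j)) * Real.exp (y * (1 - u i))
          = u i * u j * Real.exp (x * (1 - u j) + y * (1 - u i)) := by
        rw [Real.exp_add]; ring
      have h2 : u i * u j * Real.exp (x * (1 - u i)) * Real.exp (y * (1 - u j))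
          = u i * u j * Real.exp (x * (1 - u i) + y * (1 - u j)) := by
        rw [Real.exp_add]; ring
      rw [h1, h2]
      apply mul_lt_mul_of_pos_left _ (mul_pos (hpos i) (hpos j))
      apply Real.exp_lt_exp.2
      nlinarith
    have hterm_nonneg : ∀ i j, 0 ≤ (u i - u j) * (c i j - c j i) := by
      intro i j
      rcases le_total (u i) (u j) with h | h
      · nlinarith [hcle i j h]
      · exact mul_nonneg (by linarith) (by linarith [hcle j i h])
    obtain ⟨i0, hi0⟩ := Fintype.exists_ne_of_one_lt_card (by simp; omega : 1 < Fintype.card (Fin N)) m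
    have hterm_pos : 0 < (u i0 - u m) * (c i0 m - c m i0) := by
      have h1 := hmin i0 hi0
      exact mul_pos (by linarith) (by linarith [hclt m i0 h1])
    have hD : num x * den y - num y * den x = ∑ i, ∑ j, (u i - u j) * c i j := by
      rw [h1, h2, ← Finset.sum_sub_distrib]
      exact Finset.sum_congr rfl fun i _ => by
        rw [← Finset.sum_sub_distrib]
        exact Finset.sum_congr rfl fun j _ => by ring
    have h2D : (∑ i, ∑ j, (u i - u j) * (c i j - c j i))
        = 2 * (∑ i, ∑ j, (u i - u j) * c i j) := by
      have hswap : (∑ i, ∑ j, (u i - u j) * c j i)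
          = - ∑ i, ∑ j, (u i - u j) * c i j := by
        rw [Finset.sum_comm, ← Finset.sum_neg_distrib]
        exact Finset.sum_congr rfl fun i _ => by
          rw [← Finset.sum_neg_distrib]
          exact Finset.sum_congr rfl fun j _ => by ring
      calc (∑ i, ∑ j, (u i - u j) * (c i j - c j i))
          = (∑ i, ∑ j, ((u i - u j) * c i j - (u i - u j) * c j i)) := by
            exact Finset.sum_congr rfl fun i _ => Finset.sum_congr rfl fun j _ => by ring
        _ = (∑ i, ∑ j, (u i - u j) * c i j) - (∑ i, ∑ j, (u i - u j) * c j i) := by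
            rw [← Finset.sum_sub_distrib]
            exact Finset.sum_congr rfl fun i _ => by rw [← Finset.sum_sub_distrib]
        _ = 2 * (∑ i, ∑ j, (u i - u j) * c i j) := by rw [hswap]; ring
    have hpos2D : 0 < ∑ i, ∑ j, (u i - u j) * (c i j - c j i) := by
      apply Finset.sum_pos' (fun i _ => Finset.sum_nonneg fun j _ => hterm_nonneg i j)
      refine ⟨i0, mem_univ i0, Finset.sum_pos' (fun j _ => hterm_nonneg i0 j)
        ⟨m, mem_univ m, hterm_pos⟩⟩
    nlinarith [hD, h2D, hpos2D]
  have hanti : StrictAnti g := by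
    intro x y hxy
    rw [hg]
    exact div_lt_div_iff₀ (hden_pos y) (hden_pos x) |>.2 (key x y hxy)
  -- continuity
  have hcont : Continuous g := by
    apply Continuous.div
    · exact continuous_finset_sum _ fun i _ => by fun_prop
    · exact continuous_finset_sum _ fun i _ => by fun_prop
    · exact fun ϖ => ne_of_gt (hden_pos ϖ)
  -- value at 0
  have hg0 : g 0 = ∑ i, (u i) ^ 2 := by
    simp [hg, hnum, hden, hsum]
  -- limit at infinity
  have hgtend : Tendsto g atTop (nhds (u m)) := by
    set num' : ℝ → ℝ := fun ϖ => ∑ i, (u i) ^ 2 * Real.exp (ϖ * (u m - u i)) with hnum'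
    set den' : ℝ → ℝ := fun ϖ => ∑ i, u i * Real.exp (ϖ * (u m - u i)) with hden'
    have hfac : ∀ ϖ, g ϖ = num' ϖ / den' ϖ := by
      intro ϖ
      have h1 : num ϖ = Real.exp (ϖ * (1 - u m)) * num' ϖ := by
        rw [hnum, hnum', Finset.mul_sum]
        exact Finset.sum_congr rfl fun i _ => by
          rw [← mul_assoc, mul_comm (Real.exp _) ((u i)^2), mul_assoc, ← Real.exp_add]
          ring_nf
      have h2 : den ϖ = Real.exp (ϖ * (1 - u m)) * den' ϖ := by
        rw [hden, hden', Finset.mul_sum]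
        exact Finset.sum_congr rfl fun i _ => by
          rw [← mul_assoc, mul_comm (Real.exp _) (u i), mul_assoc, ← Real.exp_add]
          ring_nf
      show num ϖ / den ϖ = num' ϖ / den' ϖ
      rw [h1, h2, mul_div_mul_left _ _ (Real.exp_ne_zero _)]
    have hterm : ∀ (a : ℝ) (i : Fin N), Tendsto (fun ϖ => a * Real.exp (ϖ * (u m - u i)))
        atTop (nhds (if i = m then a else 0)) := by
      intro a i
      by_cases h : i = m
      · subst h; simp
      · simp only [if_neg h]
        have hc : u m - u i < 0 := by linarith [hmin i h]
        have : Tendsto (fun ϖ : ℝ => ϖ * (u m - u i)) atTop atBot :=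
          tendsto_id.atTop_mul_const_of_neg hc
        have := (Real.tendsto_exp_atBot).comp this
        simpa using this.const_mul a
    have hnt : Tendsto num' atTop (nhds (u m ^ 2)) := by
      have := tendsto_finset_sum (univ : Finset (Fin N))
        (fun i _ => hterm ((u i)^2) i)
      simpa [Finset.sum_ite_eq'] using this
    have hdt : Tendsto den' atTop (nhds (u m)) := by
      have := tendsto_finset_sum (univ : Finset (Fin N))
        (fun i _ => hterm (u i) i)
      simpa [Finset.sum_ite_eq'] using this
    have : Tendsto (fun ϖ => num' ϖ / den' ϖ) atTop (nhds (u m ^ 2 / u m)) :=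
      hnt.div hdt (ne_of_gt (hpos m))
    have heq : u m ^ 2 / u m = u m := by
      field_simp [ne_of_gt (hpos m)]
    rw [heq] at this
    exact this.congr fun ϖ => (hfac ϖ).symm
  -- find B with g B < 1 - α and B > 0
  have hum : u m < 1 - α := by linarith
  have hev : ∀ᶠ ϖ in atTop, g ϖ < 1 - α :=
    hgtend.eventually_lt_const hum
  obtain ⟨B, hB1, hB2⟩ := (hev.and (eventually_gt_atTop 0)).exists
  -- IVT
  have hmem : 1 - α ∈ Set.Ioo (g B) (g 0) := ⟨hB1, by rw [hg0]; linarith⟩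
  have := intermediate_value_Ioo' (le_of_lt hB2) (hcont.continuousOn)
  obtain ⟨ϖ, hϖmem, hϖeq⟩ := this hmem
  exact ⟨ϖ, ⟨hϖmem.1, hϖeq⟩, fun y hy => hanti.injective (hy.2.trans hϖeq.symm)⟩
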